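/- Let n_x, n_θ, n_y be natural numbers with n_y ≥ 1, and for each integer n_e ≥ 1 define F(n_e) = ⌈(n_e·n_x + n_θ − n_e·n_y)/(n_e·n_y)⌉, the minimum number of Lie derivatives for which the multi-experiment observability–identifiability matrix with n_e experiments has at least as many rows as columns. Then F is antitone in the number of experiments: for all 1 ≤ n_e ≤ n_e', F(n_e') ≤ F(n_e). In particular, F(n_e) ≤ F(1) = ⌈(n_x + n_θ − n_y)/n_y⌉ for every n_e ≥ 1, so using multiple experiments may decrease, and never increases, the required number of Lie derivatives. -/
import Mathlib


/-- The minimum number of Lie derivatives for which the multi-experiment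
observability–identifiability matrix with n_e experiments has at least as
many rows as columns, F(n_e) = ⌈(n_e·n_x + n_θ − n_e·n_y)/(n_e·n_y)⌉, is
antitone in n_e ≥ 1; in particular F(n_e) ≤ F(1) = ⌈(n_x + n_θ − n_y)/n_y⌉. -/
theorem stmt_17 (nx nθ ny : ℕ) (hny : 1 ≤ ny) (F : ℕ → ℤ)
    (hF : ∀ ne : ℕ, F ne =
      ⌈(((ne : ℚ) * nx + nθ - (ne : ℚ) * ny) / ((ne : ℚ) * ny))⌉) :
    (∀ ne ne' : ℕ, 1 ≤ ne → ne ≤ ne' → F ne' ≤ F ne) ∧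
    F 1 = ⌈(((nx : ℚ) + nθ - ny) / (ny : ℚ))⌉ ∧
    (∀ ne : ℕ, 1 ≤ ne → F ne ≤ F 1) := by
  have hny' : (0 : ℚ) < ny := by exact_mod_cast hny
  have anti : ∀ ne ne' : ℕ, 1 ≤ ne → ne ≤ ne' → F ne' ≤ F ne := by
    intro ne ne' h1 hle
    rw [hF ne, hF ne']
    apply Int.ceil_le_ceil
    have hne : (0 : ℚ) < ne := by exact_mod_cast h1
    have hne' : (0 : ℚ) < ne' := lt_of_lt_of_le hne (by exact_mod_cast hle)
    have hle' : (ne : ℚ) ≤ ne' := by exact_mod_cast hle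
    rw [div_le_div_iff₀ (by positivity) (by positivity)]
    have hθ : (0 : ℚ) ≤ nθ := by positivity
    nlinarith [mul_le_mul_of_nonneg_left hle' (mul_nonneg hθ hny'.le)]
  refine ⟨anti, ?_, ?_⟩
  · rw [hF 1]; norm_num
  · intro ne h1; exact anti 1 ne le_rfl h1
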